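/- arXiv:1001.1475 — 9 statements merged into one kernel-verified Lean document; each statement's English description precedes it below -/
import Mathlib

section
/- Let G and H be profinite groups, let f : G → H be a continuous surjective group homomorphism, and let g : H → G be a continuous group homomorphism such that f ∘ g is the identity on H. If X is a subset of G that topologically generates G, then the kernel of f is equal to the smallest closed normal subgroup of G containing the set {g(f(x))·x⁻¹ : x ∈ X} (i.e., the topological closure of the normal closure of that set). -/
/-- For profinite groups `G`, `H`, a continuous surjective homomorphism
`f : G → H`, a continuous homomorphism `g : H → G` with `f ∘ g = id`, and a subset `X`
topologically generating `G`, the kernel of `f` equals the smallest closed normal subgroup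
of `G` containing `{g(f(x)) * x⁻¹ : x ∈ X}` (the topological closure of the normal closure). -/
theorem stmt0 {G H : Type*}
    [Group G] [TopologicalSpace G] [IsTopologicalGroup G]
    [CompactSpace G] [T2Space G] [TotallyDisconnectedSpace G]
    [Group H] [TopologicalSpace H] [IsTopologicalGroup H]
    [CompactSpace H] [T2Space H] [TotallyDisconnectedSpace H]
    (f : G →* H) (hf_cont : Continuous f) (hf_surj : Function.Surjective f)
    (g : H →* G) (hg_cont : Continuous g) (hfg : ∀ h : H, f (g h) = h)
    (X : Set G) (hX : (Subgroup.closure X).topologicalClosure = ⊤) :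
    f.ker = (Subgroup.normalClosure ((fun x => g (f x) * x⁻¹) '' X)).topologicalClosure := by
  set S := (fun x => g (f x) * x⁻¹) '' X with hS
  set N := (Subgroup.normalClosure S).topologicalClosure with hNdef
  have hNnormal : N.Normal := Subgroup.is_normal_topologicalClosure _
  have hNclosed : IsClosed (N : Set G) := Subgroup.isClosed_topologicalClosure _
  apply le_antisymm
  · -- ker f ≤ N
    have hcont : Continuous fun x : G => g (f x) * x⁻¹ :=
      (hg_cont.comp hf_cont).mul continuous_inv
    let K : Subgroup G :=
      { carrier := {x : G | g (f x) * x⁻¹ ∈ N}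
        one_mem' := by simpa using N.one_mem
        mul_mem' := by
          intro a b ha hb
          simp only [Set.mem_setOf_eq, map_mul, mul_inv_rev] at *
          convert N.mul_mem (hNnormal.conj_mem _ hb (g (f a))) ha using 1
          group
        inv_mem' := by
          intro a ha
          simp only [Set.mem_setOf_eq, map_inv] at *
          convert hNnormal.conj_mem _ (N.inv_mem ha) (g (f a))⁻¹ using 1
          group }
    have hKclosed : IsClosed (K : Set G) := hNclosed.preimage hcont
    have hXK : X ⊆ K := by
      intro x hx
      exact Subgroup.le_topologicalClosure _
        (Subgroup.subset_normalClosure ⟨x, hx, rfl⟩)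
    have hKtop : K = ⊤ := by
      rw [← top_le_iff, ← hX]
      exact Subgroup.topologicalClosure_minimal _ ((Subgroup.closure_le K).2 hXK) hKclosed
    intro k hk
    have hkK : k ∈ K := hKtop ▸ Subgroup.mem_top k
    have : g (f k) * k⁻¹ ∈ N := hkK
    rw [MonoidHom.mem_ker.mp hk, map_one, one_mul] at this
    simpa using N.inv_mem this
  · -- N ≤ ker f
    have hker_closed : IsClosed (f.ker : Set G) := by
      have : (f.ker : Set G) = f ⁻¹' {1} := rfl
      rw [this]
      exact isClosed_singleton.preimage hf_cont
    refine Subgroup.topologicalClosure_minimal _ ?_ hker_closed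
    refine Subgroup.normalClosure_le_normal ?_
    rintro _ ⟨x, -, rfl⟩
    simp [MonoidHom.mem_ker, hfg]
end

section
/- Let G be a profinite group topologically generated by a finite subset X, let Φ₀ : G → G be a continuous group homomorphism with Φ₀ ∘ Φ₀ = Φ₀, let T be a profinite group, and let π : G → T be a continuous surjective group homomorphism satisfying π ∘ Φ₀ = π. Let N be the smallest closed normal subgroup of G containing {Φ₀(x)·x⁻¹ : x ∈ X}. Then the following are equivalent: (i) N = ker π; (ii) ker π ⊆ ker Φ₀; (iii) ker π = ker Φ₀. -/
/-- Let `G` be a profinite group topologically generated by a finite subset `X`,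
`Φ₀ : G → G` a continuous idempotent endomorphism, `T` a profinite group, and `π : G → T`
a continuous surjective homomorphism with `π ∘ Φ₀ = π`.  Let `N` be the smallest closed normal
subgroup of `G` containing `{Φ₀(x) * x⁻¹ : x ∈ X}`.  Then the following are equivalent:
`N = ker π`; `ker π ⊆ ker Φ₀`; `ker π = ker Φ₀`. -/
theorem stmt1 {G T : Type*}
    [Group G] [TopologicalSpace G] [IsTopologicalGroup G]
    [CompactSpace G] [T2Space G] [TotallyDisconnectedSpace G]
    [Group T] [TopologicalSpace T] [IsTopologicalGroup T]
    [CompactSpace T] [T2Space T] [TotallyDisconnectedSpace T]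
    (X : Set G) (hXfin : X.Finite) (hX : (Subgroup.closure X).topologicalClosure = ⊤)
    (Φ₀ : G →* G) (hΦ₀_cont : Continuous Φ₀) (hΦ₀_idem : Φ₀.comp Φ₀ = Φ₀)
    (π : G →* T) (hπ_cont : Continuous π) (hπ_surj : Function.Surjective π)
    (hπΦ₀ : π.comp Φ₀ = π) :
    List.TFAE
      [(Subgroup.normalClosure ((fun x => Φ₀ x * x⁻¹) '' X)).topologicalClosure = π.ker,
       π.ker ≤ Φ₀.ker,
       π.ker = Φ₀.ker] := by
  have hπΦ : ∀ g, π (Φ₀ g) = π g := fun g => DFunLike.congr_fun hπΦ₀ g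
  have hΦΦ : ∀ g, Φ₀ (Φ₀ g) = Φ₀ g := fun g => DFunLike.congr_fun hΦ₀_idem g
  set S := (fun x => Φ₀ x * x⁻¹) '' X with hS
  set N := (Subgroup.normalClosure S).topologicalClosure with hNdef
  have hNnormal : N.Normal := Subgroup.is_normal_topologicalClosure _
  have hNclosed : IsClosed (N : Set G) := Subgroup.isClosed_topologicalClosure _
  -- ker Φ₀ ≤ ker π always
  have hkerΦπ : Φ₀.ker ≤ π.ker := by
    intro g hg
    have : Φ₀ g = 1 := hg
    have : π g = 1 := by rw [← hπΦ g, this, map_one]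
    exact this
  -- ker Φ₀ is closed
  have hkerΦclosed : IsClosed (Φ₀.ker : Set G) := by
    have : (Φ₀.ker : Set G) = Φ₀ ⁻¹' {1} := by
      ext g; simp [MonoidHom.mem_ker]
    rw [this]; exact isClosed_singleton.preimage hΦ₀_cont
  have hkerπclosed : IsClosed (π.ker : Set G) := by
    have : (π.ker : Set G) = π ⁻¹' {1} := by
      ext g; simp [MonoidHom.mem_ker]
    rw [this]; exact isClosed_singleton.preimage hπ_cont
  -- N ≤ ker Φ₀
  have hNkerΦ : N ≤ Φ₀.ker := by
    apply Subgroup.topologicalClosure_minimal _ _ hkerΦclosed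
    apply Subgroup.normalClosure_le_normal
    rintro _ ⟨x, -, rfl⟩
    show Φ₀ (Φ₀ x * x⁻¹) = 1
    rw [map_mul, map_inv, hΦΦ, mul_inv_cancel]
  have hNkerπ : N ≤ π.ker := hNkerΦ.trans hkerΦπ
  -- 2 → 1 key: every g satisfies Φ₀ g * g⁻¹ ∈ N
  have hHall : ∀ g : G, Φ₀ g * g⁻¹ ∈ N := by
    let H : Subgroup G :=
      { carrier := {g | Φ₀ g * g⁻¹ ∈ N}
        one_mem' := by simpa using one_mem N
        mul_mem' := by
          intro a b ha hb
          have key : Φ₀ (a * b) * (a * b)⁻¹ =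
              (Φ₀ a * a⁻¹) * (a * (Φ₀ b * b⁻¹) * a⁻¹) := by
            rw [map_mul]; group
          show Φ₀ (a * b) * (a * b)⁻¹ ∈ N
          rw [key]
          exact mul_mem ha (hNnormal.conj_mem _ hb a)
        inv_mem' := by
          intro a ha
          have key : Φ₀ a⁻¹ * (a⁻¹)⁻¹ = a⁻¹ * (Φ₀ a * a⁻¹)⁻¹ * a⁻¹⁻¹ := by
            rw [map_inv]; group
          show Φ₀ a⁻¹ * (a⁻¹)⁻¹ ∈ N
          rw [key]
          exact hNnormal.conj_mem _ (inv_mem ha) a⁻¹ }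
    have hHclosed : IsClosed (H : Set G) := by
      have : (H : Set G) = (fun g => Φ₀ g * g⁻¹) ⁻¹' N := rfl
      rw [this]
      exact hNclosed.preimage (hΦ₀_cont.mul continuous_inv)
    have hXH : X ⊆ H := by
      intro x hx
      show Φ₀ x * x⁻¹ ∈ N
      exact Subgroup.le_topologicalClosure _
        (Subgroup.subset_normalClosure ⟨x, hx, rfl⟩)
    have : (⊤ : Subgroup G) ≤ H := by
      rw [← hX]
      exact Subgroup.topologicalClosure_minimal _ (Subgroup.closure_le H |>.mpr hXH) hHclosed
    exact fun g => this (Subgroup.mem_top g)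
  tfae_have 1 → 2 := by
    intro h1
    rw [← h1]
    exact hNkerΦ
  tfae_have 2 → 3 := fun h2 => le_antisymm h2 hkerΦπ
  tfae_have 3 → 2 := fun h3 => h3.le
  tfae_have 2 → 1 := by
    intro h2
    refine le_antisymm hNkerπ ?_
    intro g hg
    have hΦg : Φ₀ g = 1 := h2 hg
    have := hHall g
    rw [hΦg, one_mul] at this
    exact (inv_mem_iff).mp this
  tfae_finish
end

section
/- Let F be a profinite group topologically generated by a subset X, and let Φ₀ : F → F be a continuous group homomorphism with Φ₀ ∘ Φ₀ = Φ₀ (a retraction of F). Then the kernel of Φ₀ equals the smallest closed normal subgroup of F containing the set {Φ₀(x)·x⁻¹ : x ∈ X}. -/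
/-- For a profinite group `F` topologically generated by a subset `X` and a
continuous idempotent endomorphism (retraction) `Φ₀` of `F`, the kernel of `Φ₀` equals the
smallest closed normal subgroup of `F` containing `{Φ₀(x) * x⁻¹ : x ∈ X}`. -/
theorem stmt2 {F : Type*}
    [Group F] [TopologicalSpace F] [IsTopologicalGroup F]
    [CompactSpace F] [T2Space F] [TotallyDisconnectedSpace F]
    (X : Set F) (hX : (Subgroup.closure X).topologicalClosure = ⊤)
    (Φ₀ : F →* F) (hΦ₀_cont : Continuous Φ₀) (hΦ₀_idem : Φ₀.comp Φ₀ = Φ₀) :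
    Φ₀.ker = (Subgroup.normalClosure ((fun x => Φ₀ x * x⁻¹) '' X)).topologicalClosure := by
  set S : Set F := (fun x => Φ₀ x * x⁻¹) '' X with hS
  set N : Subgroup F := (Subgroup.normalClosure S).topologicalClosure with hN
  have hNnormal : N.Normal := Subgroup.is_normal_topologicalClosure _
  have hNclosed : IsClosed (N : Set F) := Subgroup.isClosed_topologicalClosure _
  have hidem : ∀ x : F, Φ₀ (Φ₀ x) = Φ₀ x := fun x => DFunLike.congr_fun hΦ₀_idem x
  -- reverse inclusion: N ≤ ker
  have h1 : N ≤ Φ₀.ker := by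
    apply Subgroup.topologicalClosure_minimal
    · apply Subgroup.normalClosure_le_normal
      rintro _ ⟨x, -, rfl⟩
      simp [MonoidHom.mem_ker, hidem x]
    · exact IsClosed.preimage hΦ₀_cont isClosed_singleton
  -- forward inclusion
  refine le_antisymm ?_ h1
  -- the subgroup where Φ₀ g ≡ g mod N
  let H : Subgroup F :=
    { carrier := {g | Φ₀ g * g⁻¹ ∈ N}
      one_mem' := by simpa using N.one_mem
      mul_mem' := by
        intro a b ha hb
        simp only [Set.mem_setOf_eq, map_mul] at *
        have : Φ₀ a * Φ₀ b * (a * b)⁻¹ = (Φ₀ a * a⁻¹) * (a * (Φ₀ b * b⁻¹) * a⁻¹) := by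
          group
        rw [this]
        exact mul_mem ha (hNnormal.conj_mem _ hb a)
      inv_mem' := by
        intro a ha
        simp only [Set.mem_setOf_eq, map_inv] at *
        have : (Φ₀ a)⁻¹ * a⁻¹⁻¹ = (Φ₀ a)⁻¹ * (Φ₀ a * a⁻¹)⁻¹ * Φ₀ a := by group
        rw [this]
        exact Subgroup.Normal.conj_mem' hNnormal _ (inv_mem ha) _ }
  have hHclosed : IsClosed (H : Set F) := by
    have : (H : Set F) = (fun g => Φ₀ g * g⁻¹) ⁻¹' (N : Set F) := rfl
    rw [this]
    exact IsClosed.preimage (by continuity) hNclosed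
  have hXH : X ⊆ (H : Set F) := by
    intro x hx
    exact Subgroup.le_topologicalClosure _ (Subgroup.subset_normalClosure ⟨x, hx, rfl⟩)
  have hHtop : H = ⊤ := top_le_iff.mp (hX ▸ Subgroup.topologicalClosure_minimal _
      ((Subgroup.closure_le H).mpr hXH) hHclosed)
  intro g hg
  have hgH : g ∈ H := hHtop ▸ Subgroup.mem_top g
  have : Φ₀ g * g⁻¹ ∈ N := hgH
  rw [MonoidHom.mem_ker.mp hg, one_mul] at this
  exact (inv_mem_iff).mp this
end

section
/- Let T be a profinite group that is topologically generated by a finite subset, and let φ : T → T be a continuous group automorphism. Then for every t ∈ T, the sequence n ↦ φ^(n!)(t) (the (n!)-fold iterate of φ applied to t) converges to t as n → ∞. -/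
/-- In a compact group with a dense subgroup generated by a finite set, the set of open
normal subgroups of index at most `m` is finite. -/
lemma aux_finite {T : Type*} [Group T] [TopologicalSpace T] [IsTopologicalGroup T]
    [CompactSpace T]
    (X : Set T) (hXfin : X.Finite) (hX : (Subgroup.closure X).topologicalClosure = ⊤)
    (m : ℕ) :
    {N : Subgroup T | N.Normal ∧ IsOpen (N : Set T) ∧ N.index ≤ m}.Finite := by
  set S := {N : Subgroup T | N.Normal ∧ IsOpen (N : Set T) ∧ N.index ≤ m} with hS
  have hD : Dense ((Subgroup.closure X : Subgroup T) : Set T) := by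
    have h1 : ((Subgroup.closure X).topologicalClosure : Set T)
        = ((⊤ : Subgroup T) : Set T) := by rw [hX]
    rw [dense_iff_closure_eq]
    rw [Subgroup.topologicalClosure_coe] at h1
    rw [h1, Subgroup.coe_top]
  have hexists : ∀ N ∈ S, ∃ f : T →* Equiv.Perm (Fin m), f.ker = N := by
    rintro N ⟨hNnorm, hNopen, hNidx⟩
    haveI := hNnorm
    haveI : Finite (T ⧸ N) := Subgroup.quotient_finite_of_isOpen N hNopen
    haveI : Fintype (T ⧸ N) := Fintype.ofFinite _
    have hcard : Fintype.card (T ⧸ N) ≤ m := by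
      rw [← Nat.card_eq_fintype_card, ← Subgroup.index_eq_card]; exact hNidx
    let emb : (T ⧸ N) ↪ Fin m :=
      (Fintype.equivFin (T ⧸ N)).toEmbedding.trans (Fin.castLEEmb hcard)
    refine ⟨(Equiv.Perm.viaEmbeddingHom emb).comp
      ((MulAction.toPermHom (T ⧸ N) (T ⧸ N)).comp (QuotientGroup.mk' N)), ?_⟩
    have hinj : Function.Injective
        ((Equiv.Perm.viaEmbeddingHom emb).comp (MulAction.toPermHom (T ⧸ N) (T ⧸ N))) :=
      (Equiv.Perm.viaEmbeddingHom_injective emb).comp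
        (fun a b h => MulAction.toPerm_injective h)
    have : (Equiv.Perm.viaEmbeddingHom emb).comp
        ((MulAction.toPermHom (T ⧸ N) (T ⧸ N)).comp (QuotientGroup.mk' N))
        = ((Equiv.Perm.viaEmbeddingHom emb).comp
          (MulAction.toPermHom (T ⧸ N) (T ⧸ N))).comp (QuotientGroup.mk' N) := by
      rw [MonoidHom.comp_assoc]
    rw [this, ← MonoidHom.comap_ker, (MonoidHom.ker_eq_bot_iff _).2 hinj,
      MonoidHom.comap_bot, QuotientGroup.ker_mk']
  rw [← Set.finite_coe_iff]
  choose f hf using hexists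
  haveI hXfinite : Finite ↥X := hXfin
  refine Finite.of_injective
    (fun N : S => (fun x : X => f N.1 N.2 (x : T))) ?_
  rintro ⟨N, hN⟩ ⟨N', hN'⟩ h
  have hXagree : ∀ x ∈ X, f N hN x = f N' hN' x := by
    intro x hx
    exact congrFun h ⟨x, hx⟩
  have hDagree : ∀ y ∈ Subgroup.closure X, f N hN y = f N' hN' y := by
    intro y hy
    refine Subgroup.closure_induction (fun x hx => hXagree x hx) (by simp)
      (fun a b _ _ ha hb => by rw [map_mul, map_mul, ha, hb])
      (fun a _ ha => by rw [map_inv, map_inv, ha]) hy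
  have hclos : ∀ (M : Subgroup T), IsOpen (M : Set T) →
      (M : Set T) = closure ((M : Set T) ∩ ((Subgroup.closure X : Subgroup T) : Set T)) := by
    intro M hMopen
    apply subset_antisymm
    · exact hD.open_subset_closure_inter hMopen
    · have h2 : closure ((M : Set T) ∩ ((Subgroup.closure X : Subgroup T) : Set T))
          ⊆ closure (M : Set T) := closure_mono Set.inter_subset_left
      rwa [(Subgroup.isClosed_of_isOpen M hMopen).closure_eq] at h2
  have hsets : (N : Set T) ∩ ((Subgroup.closure X : Subgroup T) : Set T)
      = (N' : Set T) ∩ ((Subgroup.closure X : Subgroup T) : Set T) := by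
    ext y
    simp only [Set.mem_inter_iff, SetLike.mem_coe]
    constructor
    · rintro ⟨hyN, hyD⟩
      refine ⟨?_, hyD⟩
      rw [← hf N' hN', MonoidHom.mem_ker, ← hDagree y hyD, ← MonoidHom.mem_ker, hf N hN]
      exact hyN
    · rintro ⟨hyN, hyD⟩
      refine ⟨?_, hyD⟩
      rw [← hf N hN, MonoidHom.mem_ker, hDagree y hyD, ← MonoidHom.mem_ker, hf N' hN']
      exact hyN
  have : (N : Set T) = (N' : Set T) := by
    rw [hclos N hN.2.1, hclos N' hN'.2.1, hsets]
  exact Subtype.ext (SetLike.coe_injective this)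

/-- For a profinite group `T` topologically generated by a finite subset and a
continuous automorphism `φ : T → T`, for every `t ∈ T` the sequence `n ↦ φ^(n!)(t)`
converges to `t`. -/
theorem stmt3 {T : Type*}
    [Group T] [TopologicalSpace T] [IsTopologicalGroup T]
    [CompactSpace T] [T2Space T] [TotallyDisconnectedSpace T]
    (X : Set T) (hXfin : X.Finite) (hX : (Subgroup.closure X).topologicalClosure = ⊤)
    (φ : T ≃* T) (hφ_cont : Continuous φ) :
    ∀ t : T,
      Filter.Tendsto (fun n : ℕ => (⇑φ)^[n.factorial] t) Filter.atTop (nhds t) := by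
  intro t
  rw [tendsto_nhds]
  intro U Uopen htU
  have hWopen : IsOpen ((fun y => t * y) ⁻¹' U) := Uopen.preimage (continuous_mul_left t)
  have h1W : (1 : T) ∈ (fun y => t * y) ⁻¹' U := by simpa using htU
  obtain ⟨V, Vclopen, h1V, hVW⟩ := compact_exists_isClopen_in_isOpen hWopen h1W
  obtain ⟨N, hNV⟩ :=
    IsTopologicalGroup.exist_openNormalSubgroup_sub_clopen_nhds_of_one Vclopen h1V
  set m := (N.toOpenSubgroup : Subgroup T).index with hm
  set S := {N' : Subgroup T | N'.Normal ∧ IsOpen (N' : Set T) ∧ N'.index ≤ m} with hSdef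
  have hSfin : S.Finite := aux_finite X hXfin hX m
  set K : Subgroup T := sInf S with hKdef
  have hNmem : (N.toOpenSubgroup : Subgroup T) ∈ S :=
    ⟨N.isNormal', N.toOpenSubgroup.isOpen, le_refl m⟩
  have hKle : K ≤ (N.toOpenSubgroup : Subgroup T) := sInf_le hNmem
  have hKopen : IsOpen (K : Set T) := by
    rw [hKdef, Subgroup.coe_sInf]
    exact hSfin.isOpen_biInter (fun N' hN' => hN'.2.1)
  haveI hKnorm : K.Normal := by
    constructor
    intro x hx g
    rw [hKdef, Subgroup.mem_sInf] at hx ⊢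
    intro N' hN'
    exact hN'.1.conj_mem x (hx N' hN') g
  have hφsymm_cont : Continuous (φ.symm : T → T) :=
    (Continuous.homeoOfEquivCompactToT2 (f := φ.toEquiv) hφ_cont).symm.continuous
  have hcomap : ∀ (e : T ≃* T), Continuous e → ∀ N' ∈ S,
      Subgroup.comap (e : T →* T) N' ∈ S := by
    intro e he N' hN'
    refine ⟨hN'.1.comap _, ?_, ?_⟩
    · rw [Subgroup.coe_comap]; exact hN'.2.1.preimage he
    · rw [Subgroup.index_comap_of_surjective _ e.surjective]; exact hN'.2.2
  have hKmem : ∀ (e : T ≃* T), Continuous e → ∀ x ∈ K, e x ∈ K := by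
    intro e he x hx
    rw [hKdef, Subgroup.mem_sInf] at hx ⊢
    intro N' hN'
    exact hx _ (hcomap e he N' hN')
  have hmap : K.map (φ : T →* T) = K := by
    rw [Subgroup.map_equiv_eq_comap_symm]
    ext x
    rw [Subgroup.mem_comap]
    constructor
    · intro hx
      have h2 := hKmem φ hφ_cont _ hx
      simpa using h2
    · intro hx
      exact hKmem φ.symm hφsymm_cont x hx
  haveI : Finite (T ⧸ K) := Subgroup.quotient_finite_of_isOpen K hKopen
  haveI : Finite (MulAut (T ⧸ K)) := MulEquiv.finite_left
  haveI : Nonempty (MulAut (T ⧸ K)) := ⟨1⟩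
  let ψ : MulAut (T ⧸ K) := QuotientGroup.congr K K φ hmap
  set k := Nat.card (MulAut (T ⧸ K)) with hk
  have hkpos : 0 < k := Nat.card_pos
  have hψpow : ∀ (j : ℕ) (x : T),
      (ψ ^ j) (QuotientGroup.mk x) = QuotientGroup.mk ((⇑φ)^[j] x) := by
    intro j
    induction j with
    | zero => intro x; simp
    | succ j ih =>
      intro x
      rw [pow_succ, Function.iterate_succ_apply, MulAut.mul_apply,
        show ψ (QuotientGroup.mk x) = QuotientGroup.mk (φ x) from rfl]
      exact ih (φ x)
  rw [Filter.mem_atTop_sets]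
  refine ⟨k, fun n hn => ?_⟩
  have hdvd : k ∣ n.factorial := Nat.dvd_factorial hkpos hn
  obtain ⟨c, hc⟩ := hdvd
  have hψ1 : ψ ^ n.factorial = 1 := by
    rw [hc, hk, pow_mul, pow_card_eq_one', one_pow]
  have hq : QuotientGroup.mk ((⇑φ)^[n.factorial] t) = (QuotientGroup.mk t : T ⧸ K) := by
    rw [← hψpow, hψ1]; rfl
  have hmem : t⁻¹ * ((⇑φ)^[n.factorial] t) ∈ K := QuotientGroup.eq.1 hq.symm
  have hU : t * (t⁻¹ * ((⇑φ)^[n.factorial] t)) ∈ U := hVW (hNV (hKle hmem))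
  simpa [mul_inv_cancel_left] using hU
end

section
/- Let G and T be profinite groups with G topologically generated by a finite subset, let π : G → T be a continuous surjective group homomorphism, let φ : T → T be a continuous group automorphism, and let Φ : G → G be a continuous group homomorphism such that π ∘ Φ = φ ∘ π. Then for every g ∈ G, the sequence n ↦ π(Φ^(n!)(g)) converges to π(g) as n → ∞. -/
/-- Let `G`, `T` be profinite groups with `G` topologically generated by a finite
subset, `π : G → T` a continuous surjective homomorphism, `φ : T → T` a continuous automorphism,
and `Φ : G → G` a continuous homomorphism with `π ∘ Φ = φ ∘ π`.  Then for every `g ∈ G` the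
sequence `n ↦ π(Φ^(n!)(g))` converges to `π(g)`. -/
theorem stmt4 {G T : Type*}
    [Group G] [TopologicalSpace G] [IsTopologicalGroup G]
    [CompactSpace G] [T2Space G] [TotallyDisconnectedSpace G]
    [Group T] [TopologicalSpace T] [IsTopologicalGroup T]
    [CompactSpace T] [T2Space T] [TotallyDisconnectedSpace T]
    (X : Set G) (hXfin : X.Finite) (hX : (Subgroup.closure X).topologicalClosure = ⊤)
    (π : G →* T) (hπ_cont : Continuous π) (hπ_surj : Function.Surjective π)
    (φ : T ≃* T) (hφ_cont : Continuous φ)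
    (Φ : G →* G) (hΦ_cont : Continuous Φ)
    (hlift : ∀ g : G, π (Φ g) = φ (π g)) :
    ∀ g : G,
      Filter.Tendsto (fun n : ℕ => π ((⇑Φ)^[n.factorial] g)) Filter.atTop (nhds (π g)) := by
  classical
  -- π intertwines iterates of Φ and φ
  have key : ∀ (m : ℕ) (g : G), π ((⇑Φ)^[m] g) = (⇑φ)^[m] (π g) := by
    intro m
    induction m with
    | zero => intro g; simp
    | succ m ih =>
        intro g
        rw [Function.iterate_succ_apply', Function.iterate_succ_apply', hlift, ih]
  -- any closed subgroup of G containing X is everything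
  have hπX : ∀ (K : Subgroup G), IsClosed (K : Set G) → X ⊆ K → K = ⊤ := by
    intro K hc hs
    have h1 : Subgroup.closure X ≤ K := (Subgroup.closure_le K).mpr hs
    have h2 : (Subgroup.closure X).topologicalClosure ≤ K :=
      Subgroup.topologicalClosure_minimal _ h1 hc
    exact top_le_iff.mp (hX ▸ h2)
  -- iterates of φ as monoid homs
  let e : Monoid.End T := φ.toMonoidHom
  have cpow : ∀ n : ℕ, ⇑(e ^ n) = (⇑φ)^[n] := by
    intro n
    exact hom_coe_pow (fun (f : Monoid.End T) => ⇑f) rfl (fun _ _ => rfl) _ n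
  intro g
  rw [(nhds_basis_clopen (π g)).tendsto_right_iff]
  rintro s ⟨hgs, hs⟩
  -- translate s to a clopen neighborhood of 1
  have hW : IsClopen ((fun t : T => π g * t) ⁻¹' s) :=
    hs.preimage (continuous_mul_left (π g))
  have h1W : (1 : T) ∈ (fun t : T => π g * t) ⁻¹' s := by
    simpa using hgs
  obtain ⟨H, hHW⟩ :=
    IsTopologicalGroup.exist_openNormalSubgroup_sub_clopen_nhds_of_one hW h1W
  haveI : H.toSubgroup.Normal := H.isNormal'
  set H' : Subgroup T := H.toSubgroup with hH'
  have hHclosed : IsClosed (H' : Set T) := H.toOpenSubgroup.isClosed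
  haveI : Finite (T ⧸ H') := H.toOpenSubgroup.toSubgroup.quotient_finite_of_isOpen H.isOpen'
  haveI : Finite ↥X := hXfin.to_subtype
  -- key step: there is d ≥ 1 with φ^[d] ≡ id mod H'
  have main : ∀ a b : ℕ, a < b →
      (∀ x : X, (QuotientGroup.mk ((⇑φ)^[a] (π x)) : T ⧸ H') = QuotientGroup.mk ((⇑φ)^[b] (π x))) →
      ∃ d : ℕ, 0 < d ∧ ∀ t : T, t⁻¹ * (⇑φ)^[d] t ∈ H' := by
    intro a b hab heq
    set qa : G →* T ⧸ H' := (QuotientGroup.mk' H').comp ((e ^ a : Monoid.End T).comp π) with hqa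
    set qb : G →* T ⧸ H' := (QuotientGroup.mk' H').comp ((e ^ b : Monoid.End T).comp π) with hqb
    have hqa' : ∀ g : G, qa g = QuotientGroup.mk ((⇑φ)^[a] (π g)) := by
      intro g; simp [hqa, cpow, QuotientGroup.mk'_apply]
      exact congrArg QuotientGroup.mk (congrFun (cpow a) (π g))
    have hqb' : ∀ g : G, qb g = QuotientGroup.mk ((⇑φ)^[b] (π g)) := by
      intro g; simp [hqb, cpow, QuotientGroup.mk'_apply]
      exact congrArg QuotientGroup.mk (congrFun (cpow b) (π g))
    set K : Subgroup G := qa.eqLocus qb with hK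
    have hKmem : ∀ g : G, g ∈ K ↔
        (QuotientGroup.mk ((⇑φ)^[a] (π g)) : T ⧸ H') = QuotientGroup.mk ((⇑φ)^[b] (π g)) := by
      intro g
      constructor
      · intro h; rw [← hqa', ← hqb']; exact h
      · intro h; show qa g = qb g; rw [hqa', hqb']; exact h
    have hKclosed : IsClosed (K : Set G) := by
      have : (K : Set G) =
          (fun g : G => ((⇑φ)^[a] (π g))⁻¹ * (⇑φ)^[b] (π g)) ⁻¹' (H' : Set T) := by
        ext g
        simp only [Set.mem_preimage, SetLike.mem_coe, hKmem g]
        exact QuotientGroup.eq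
      rw [this]
      exact hHclosed.preimage
        (((hφ_cont.iterate a).comp hπ_cont).inv.mul ((hφ_cont.iterate b).comp hπ_cont))
    have hXK : X ⊆ K := fun x hx => (hKmem x).mpr (heq ⟨x, hx⟩)
    have hKtop : K = ⊤ := hπX K hKclosed hXK
    have hall : ∀ t : T, (QuotientGroup.mk ((⇑φ)^[a] t) : T ⧸ H') =
        QuotientGroup.mk ((⇑φ)^[b] t) := by
      intro t
      obtain ⟨g, rfl⟩ := hπ_surj t
      exact (hKmem g).mp (hKtop ▸ Subgroup.mem_top g)
    refine ⟨b - a, Nat.sub_pos_of_lt hab, ?_⟩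
    intro t
    obtain ⟨u, rfl⟩ := (φ.surjective.iterate a) t
    have hb : (⇑φ)^[b] u = (⇑φ)^[b - a] ((⇑φ)^[a] u) := by
      rw [← Function.iterate_add_apply, Nat.sub_add_cancel hab.le]
    have := hall u
    rw [hb] at this
    exact QuotientGroup.eq.mp this
  -- pigeonhole to produce such a, b
  obtain ⟨a, b, hne, hfeq⟩ := Finite.exists_ne_map_eq_of_infinite
    (fun n : ℕ => fun x : X => (QuotientGroup.mk ((⇑φ)^[n] (π x)) : T ⧸ H'))
  have hd : ∃ d : ℕ, 0 < d ∧ ∀ t : T, t⁻¹ * (⇑φ)^[d] t ∈ H' := by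
    rcases hne.lt_or_gt with h | h
    · exact main a b h (fun x => congrFun hfeq x)
    · exact main b a h (fun x => congrFun hfeq.symm x)
  obtain ⟨d, hdpos, hdH⟩ := hd
  -- extend to multiples of d
  have hmult : ∀ (k : ℕ) (t : T), t⁻¹ * (⇑φ)^[k * d] t ∈ H' := by
    intro k
    induction k with
    | zero => intro t; simpa using one_mem H'
    | succ k ih =>
        intro t
        have h1 : (⇑φ)^[(k + 1) * d] t = (⇑φ)^[k * d] ((⇑φ)^[d] t) := by
          rw [← Function.iterate_add_apply]
          ring_nf
        rw [h1]
        have : t⁻¹ * (⇑φ)^[k * d] ((⇑φ)^[d] t) =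
            (t⁻¹ * (⇑φ)^[d] t) * (((⇑φ)^[d] t)⁻¹ * (⇑φ)^[k * d] ((⇑φ)^[d] t)) := by
          group
        rw [this]
        exact mul_mem (hdH t) (ih ((⇑φ)^[d] t))
  -- conclude: for n ≥ d, d ∣ n!
  rw [Filter.eventually_atTop]
  refine ⟨d, fun n hn => ?_⟩
  have hdvd : d ∣ n.factorial := Nat.dvd_factorial hdpos hn
  obtain ⟨k, hk⟩ := hdvd
  have hmem : (π g)⁻¹ * (⇑φ)^[n.factorial] (π g) ∈ H' := by
    rw [hk, Nat.mul_comm]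
    exact hmult k (π g)
  have := hHW hmem
  simp only [Set.mem_preimage] at this
  rw [mul_inv_cancel_left] at this
  rw [key]
  exact this
end

section
/- Let F be the free group on three generators α, β, γ, and let Ψ : F → F be the group endomorphism determined by Ψ(α)=γαβ, Ψ(β)=γβα⁻¹γαβ, Ψ(γ)=γαβα⁻¹γβ. Let F₄ be the free group on four generators α, β, γ, δ, let Ψ₄ : F₄ → F₄ be the endomorphism determined by Ψ₄(α)=γαβ, Ψ₄(β)=γδαβ, Ψ₄(γ)=γαδβ, Ψ₄(δ)=γδαδβ, and let ξ : F₄ → F be the homomorphism determined by ξ(α)=α, ξ(β)=β, ξ(γ)=γ, ξ(δ)=βα⁻¹γ. Then ξ ∘ Ψ₄ = Ψ ∘ ξ. -/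
namespace Stmt9

/-- The generator α of the free group on three generators. -/
def α : FreeGroup (Fin 3) := FreeGroup.of 0
/-- The generator β of the free group on three generators. -/
def β : FreeGroup (Fin 3) := FreeGroup.of 1
/-- The generator γ of the free group on three generators. -/
def γ : FreeGroup (Fin 3) := FreeGroup.of 2

/-- The endomorphism Ψ of the free group on α, β, γ determined by
Ψ(α)=γαβ, Ψ(β)=γβα⁻¹γαβ, Ψ(γ)=γαβα⁻¹γβ. -/
def Ψ : FreeGroup (Fin 3) →* FreeGroup (Fin 3) :=
  FreeGroup.lift ![γ * α * β, γ * β * α⁻¹ * γ * α * β, γ * α * β * α⁻¹ * γ * β]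

/-- The generator α of the free group on four generators. -/
def α₄ : FreeGroup (Fin 4) := FreeGroup.of 0
/-- The generator β of the free group on four generators. -/
def β₄ : FreeGroup (Fin 4) := FreeGroup.of 1
/-- The generator γ of the free group on four generators. -/
def γ₄ : FreeGroup (Fin 4) := FreeGroup.of 2
/-- The generator δ of the free group on four generators. -/
def δ₄ : FreeGroup (Fin 4) := FreeGroup.of 3

/-- The endomorphism Ψ₄ of the free group on α, β, γ, δ determined by
Ψ₄(α)=γαβ, Ψ₄(β)=γδαβ, Ψ₄(γ)=γαδβ, Ψ₄(δ)=γδαδβ. -/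
def Ψ₄ : FreeGroup (Fin 4) →* FreeGroup (Fin 4) :=
  FreeGroup.lift ![γ₄ * α₄ * β₄, γ₄ * δ₄ * α₄ * β₄, γ₄ * α₄ * δ₄ * β₄, γ₄ * δ₄ * α₄ * δ₄ * β₄]

/-- The homomorphism ξ from the free group on four generators to the free group on three
generators determined by ξ(α)=α, ξ(β)=β, ξ(γ)=γ, ξ(δ)=βα⁻¹γ. -/
def ξ : FreeGroup (Fin 4) →* FreeGroup (Fin 3) :=
  FreeGroup.lift ![α, β, γ, β * α⁻¹ * γ]

/-- `ξ ∘ Ψ₄ = Ψ ∘ ξ`. -/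
theorem stmt9 : ξ.comp Ψ₄ = Ψ.comp ξ := by
  ext x
  fin_cases x <;>
    simp [Ψ, Ψ₄, ξ, α, β, γ, α₄, β₄, γ₄, δ₄, mul_assoc]

end Stmt9
end

section
/- Let G be a commutative group and define the transformation T of G³ by T(x,y,z) = (z·x·y, z·y·x⁻¹·z·x·y, z·x·y·x⁻¹·z·y). Then for all a, b ∈ G and all n ≥ 0, the n-fold iterate satisfies Tⁿ(a, b, b) = (a·b^(eₙ), b^(4ⁿ), b^(4ⁿ)), where eₙ = 2·(4ⁿ − 1)/3 (the natural number satisfying 3·eₙ = 2·(4ⁿ − 1)). -/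
/-- In a commutative group `G`, for the transformation
`T(x,y,z) = (zxy, zyx⁻¹zxy, zxyx⁻¹zy)` of `G³`, the `n`-fold iterate satisfies
`Tⁿ(a,b,b) = (a·b^eₙ, b^(4ⁿ), b^(4ⁿ))`, where `eₙ` is the natural number with
`3·eₙ = 2·(4ⁿ − 1)`. -/
theorem stmt13 {G : Type*} [CommGroup G] (a b : G) (n e : ℕ)
    (he : 3 * e = 2 * (4 ^ n - 1)) :
    (fun p : G × G × G =>
        (p.2.2 * p.1 * p.2.1,
         p.2.2 * p.2.1 * p.1⁻¹ * p.2.2 * p.1 * p.2.1,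
         p.2.2 * p.1 * p.2.1 * p.1⁻¹ * p.2.2 * p.2.1))^[n] (a, b, b) =
      (a * b ^ e, b ^ 4 ^ n, b ^ 4 ^ n) := by
  induction n generalizing e with
  | zero =>
    have : e = 0 := by omega
    subst this; simp
  | succ n ih =>
    have hpos : 1 ≤ (4:ℕ) ^ n := Nat.one_le_pow _ _ (by norm_num)
    have hpow : (4:ℕ) ^ (n+1) = 4 ^ n + (4 ^ n + (4 ^ n + 4 ^ n)) := by ring
    have he' : e = (e - 2 * 4 ^ n) + (4 ^ n + 4 ^ n) := by omega
    set e₀ := e - 2 * 4 ^ n with he₀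
    have h3 : 3 * e₀ = 2 * (4 ^ n - 1) := by omega
    rw [Function.iterate_succ_apply', ih e₀ h3]
    simp only
    rw [he', hpow]
    refine Prod.ext ?_ (Prod.ext ?_ ?_) <;>
      simp [pow_add, mul_inv_rev, mul_assoc, mul_comm, mul_left_comm]
end

section
/- Let x be the 3-cycle (1 2 3) and y the 3-cycle (3 4 5) in the alternating group A₅ on five letters, and let T be the transformation of A₅ × A₅ given by T(u,v) = (u·v, v·u). Then: (i) the 6-fold iterate of T fixes the pair (x,y), i.e., T⁶(x,y) = (x,y); and (ii) the subgroup of A₅ generated by the two elements x·y·y·x and x·y·x·y·y·x is all of A₅ (these elements are the 5-cycle (1 3 2 5 4) and the 3-cycle (1 5 2)). -/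
set_option maxRecDepth 40000 in
/-- Let `x = (1 2 3)` and `y = (3 4 5)` be 3-cycles (on the five letters
`0,…,4` of `Fin 5` they are `c[0,1,2]` and `c[2,3,4]`), and let `T(u,v) = (u·v, v·u)`.
Then `T⁶(x,y) = (x,y)`, and the subgroup generated by `x·y·y·x` and `x·y·x·y·y·x`
(the 5-cycle `(1 3 2 5 4)` and a 3-cycle) is the whole alternating group `A₅`. -/
theorem stmt16 :
    (fun p : Equiv.Perm (Fin 5) × Equiv.Perm (Fin 5) =>
        (p.1 * p.2, p.2 * p.1))^[6]
      (c[0, 1, 2], c[2, 3, 4]) = (c[0, 1, 2], c[2, 3, 4]) ∧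
    Subgroup.closure
        ({c[0, 1, 2] * c[2, 3, 4] * c[2, 3, 4] * c[0, 1, 2],
          c[0, 1, 2] * c[2, 3, 4] * c[0, 1, 2] * c[2, 3, 4] * c[2, 3, 4] * c[0, 1, 2]} :
          Set (Equiv.Perm (Fin 5))) = alternatingGroup (Fin 5) := by
  constructor
  · decide
  · set σ : Equiv.Perm (Fin 5) := c[0, 1, 2] * c[2, 3, 4] * c[2, 3, 4] * c[0, 1, 2] with hσdef
    set τ : Equiv.Perm (Fin 5) :=
      c[0, 1, 2] * c[2, 3, 4] * c[0, 1, 2] * c[2, 3, 4] * c[2, 3, 4] * c[0, 1, 2] with hτdef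
    apply le_antisymm
    · rw [Subgroup.closure_le]
      rintro g (rfl | rfl) <;>
        · rw [SetLike.mem_coe, Equiv.Perm.mem_alternatingGroup]; decide
    · have hσ : σ ∈ Subgroup.closure {σ, τ} :=
        Subgroup.subset_closure (Set.mem_insert _ _)
      have hτ : τ ∈ Subgroup.closure {σ, τ} :=
        Subgroup.subset_closure (Set.mem_insert_of_mem _ rfl)
      rw [← Equiv.Perm.closure_three_cycles_eq_alternating, Subgroup.closure_le]
      intro g hg
      have h3 : g.support.card = 3 := hg.card_support
      have hlist : ∀ h : Equiv.Perm (Fin 5), h.support.card = 3 →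
          h ∈ [c[0, 3, 1], c[0, 1, 3], c[0, 2, 4], c[2, 4, 3], c[2, 3, 4], c[0, 4, 1], c[1, 2, 3], c[0, 4, 2], c[1, 4, 2], c[1, 2, 4], c[0, 1, 4], c[1, 3, 2], c[1, 3, 4], c[0, 2, 3], c[0, 1, 2], c[0, 4, 3], c[0, 3, 4], c[0, 2, 1], c[1, 4, 3], c[0, 3, 2]] := by decide
      have hmem := hlist g h3
      simp only [List.mem_cons, List.not_mem_nil, or_false] at hmem
      rcases hmem with rfl|rfl|rfl|rfl|rfl|rfl|rfl|rfl|rfl|rfl|rfl|rfl|rfl|rfl|rfl|rfl|rfl|rfl|rfl|rfl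
      · have e : (c[0, 3, 1] : Equiv.Perm (Fin 5)) = τ := by decide
        rw [e]; exact hτ
      · have e : (c[0, 1, 3] : Equiv.Perm (Fin 5)) = τ * τ := by decide
        rw [e]; exact mul_mem (hτ) hτ
      · have e : (c[0, 2, 4] : Equiv.Perm (Fin 5)) = σ * σ * τ := by decide
        rw [e]; exact mul_mem (mul_mem (hσ) hσ) hτ
      · have e : (c[2, 4, 3] : Equiv.Perm (Fin 5)) = τ * σ * σ := by decide
        rw [e]; exact mul_mem (mul_mem (hτ) hσ) hσ
      · have e : (c[2, 3, 4] : Equiv.Perm (Fin 5)) = σ * σ * σ * τ * τ := by decide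
        rw [e]; exact mul_mem (mul_mem (mul_mem (mul_mem (hσ) hσ) hσ) hτ) hτ
      · have e : (c[0, 4, 1] : Equiv.Perm (Fin 5)) = σ * σ * τ * τ * σ := by decide
        rw [e]; exact mul_mem (mul_mem (mul_mem (mul_mem (hσ) hσ) hτ) hτ) hσ
      · have e : (c[1, 2, 3] : Equiv.Perm (Fin 5)) = σ * τ * τ * σ * σ := by decide
        rw [e]; exact mul_mem (mul_mem (mul_mem (mul_mem (hσ) hτ) hτ) hσ) hσ
      · have e : (c[0, 4, 2] : Equiv.Perm (Fin 5)) = σ * τ * τ * σ * τ := by decide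
        rw [e]; exact mul_mem (mul_mem (mul_mem (mul_mem (hσ) hτ) hτ) hσ) hτ
      · have e : (c[1, 4, 2] : Equiv.Perm (Fin 5)) = τ * σ * σ * σ * τ := by decide
        rw [e]; exact mul_mem (mul_mem (mul_mem (mul_mem (hτ) hσ) hσ) hσ) hτ
      · have e : (c[1, 2, 4] : Equiv.Perm (Fin 5)) = τ * τ * σ * σ * τ * τ := by decide
        rw [e]; exact mul_mem (mul_mem (mul_mem (mul_mem (mul_mem (hτ) hτ) hσ) hσ) hτ) hτ
      · have e : (c[0, 1, 4] : Equiv.Perm (Fin 5)) = σ * σ * σ * τ * τ * σ * σ := by decide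
        rw [e]; exact mul_mem (mul_mem (mul_mem (mul_mem (mul_mem (mul_mem (hσ) hσ) hσ) hτ) hτ) hσ) hσ
      · have e : (c[1, 3, 2] : Equiv.Perm (Fin 5)) = σ * σ * σ * τ * τ * σ * τ := by decide
        rw [e]; exact mul_mem (mul_mem (mul_mem (mul_mem (mul_mem (mul_mem (hσ) hσ) hσ) hτ) hτ) hσ) hτ
      · have e : (c[1, 3, 4] : Equiv.Perm (Fin 5)) = σ * σ * τ * τ * σ * τ * τ := by decide
        rw [e]; exact mul_mem (mul_mem (mul_mem (mul_mem (mul_mem (mul_mem (hσ) hσ) hτ) hτ) hσ) hτ) hτ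
      · have e : (c[0, 2, 3] : Equiv.Perm (Fin 5)) = σ * τ * τ * σ * σ * τ * τ := by decide
        rw [e]; exact mul_mem (mul_mem (mul_mem (mul_mem (mul_mem (mul_mem (hσ) hτ) hτ) hσ) hσ) hτ) hτ
      · have e : (c[0, 1, 2] : Equiv.Perm (Fin 5)) = τ * σ * σ * σ * τ * τ * σ := by decide
        rw [e]; exact mul_mem (mul_mem (mul_mem (mul_mem (mul_mem (mul_mem (hτ) hσ) hσ) hσ) hτ) hτ) hσ
      · have e : (c[0, 4, 3] : Equiv.Perm (Fin 5)) = τ * τ * σ * σ * τ * τ * σ := by decide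
        rw [e]; exact mul_mem (mul_mem (mul_mem (mul_mem (mul_mem (mul_mem (hτ) hτ) hσ) hσ) hτ) hτ) hσ
      · have e : (c[0, 3, 4] : Equiv.Perm (Fin 5)) = σ * σ * σ * τ * τ * σ * σ * τ := by decide
        rw [e]; exact mul_mem (mul_mem (mul_mem (mul_mem (mul_mem (mul_mem (mul_mem (hσ) hσ) hσ) hτ) hτ) hσ) hσ) hτ
      · have e : (c[0, 2, 1] : Equiv.Perm (Fin 5)) = σ * σ * σ * τ * τ * σ * τ * τ := by decide
        rw [e]; exact mul_mem (mul_mem (mul_mem (mul_mem (mul_mem (mul_mem (mul_mem (hσ) hσ) hσ) hτ) hτ) hσ) hτ) hτ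
      · have e : (c[1, 4, 3] : Equiv.Perm (Fin 5)) = τ * σ * σ * σ * τ * τ * σ * σ := by decide
        rw [e]; exact mul_mem (mul_mem (mul_mem (mul_mem (mul_mem (mul_mem (mul_mem (hτ) hσ) hσ) hσ) hτ) hτ) hσ) hσ
      · have e : (c[0, 3, 2] : Equiv.Perm (Fin 5)) = τ * σ * σ * σ * τ * τ * σ * τ := by decide
        rw [e]; exact mul_mem (mul_mem (mul_mem (mul_mem (mul_mem (mul_mem (mul_mem (hτ) hσ) hσ) hσ) hτ) hτ) hσ) hτ
end

section
/- Let x be the 3-cycle (1 2 3) and y the 3-cycle (3 4 5) in the alternating group A₅ on five letters, and let T be the transformation of A₅ × A₅ given by T(u,v) = (u·v, u³·v). Then: (i) the 12-fold iterate of T fixes the pair (x,y), i.e., T¹²(x,y) = (x,y); and (ii) the subgroup of A₅ generated by {x, y} is all of A₅. -/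
open Equiv

set_option maxRecDepth 100000

private abbrev x : Perm (Fin 5) := c[0, 1, 2]
private abbrev y : Perm (Fin 5) := c[2, 3, 4]
private abbrev H : Subgroup (Perm (Fin 5)) := Subgroup.closure {x, y}

private lemma hx : x ∈ H := Subgroup.subset_closure (Or.inl rfl)
private lemma hy : y ∈ H := Subgroup.subset_closure (Or.inr rfl)

/-- The Klein four subgroup. -/
private def K : Subgroup (Perm (Fin 5)) where
  carrier := {1, x*y*x*x*y*y*x, x*y*x*y*y, (x*y*x*x*y*y*x) * (x*y*x*y*y)}
  one_mem' := by left; rfl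
  mul_mem' := by decide
  inv_mem' := by decide

private instance : DecidablePred (· ∈ K) := fun g =>
  decidable_of_iff (g = 1 ∨ g = x*y*x*x*y*y*x ∨ g = x*y*x*y*y ∨
    g = (x*y*x*x*y*y*x) * (x*y*x*y*y)) (by
      show _ ↔ g ∈ ({1, x*y*x*x*y*y*x, x*y*x*y*y, (x*y*x*x*y*y*x) * (x*y*x*y*y)} : Set _)
      simp [Set.mem_insert_iff])

private lemma cardK : Nat.card K = 4 := by
  rw [Nat.card_eq_fintype_card]
  decide

private lemma cardA : Nat.card (alternatingGroup (Fin 5)) = 60 := by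
  have h : 2 * Fintype.card (alternatingGroup (Fin 5)) = 120 := by
    rw [two_mul_card_alternatingGroup]; simp [Fintype.card_perm]; rfl
  rw [Nat.card_eq_fintype_card]
  omega

private lemma KleH : K ≤ H := by
  have m : ∀ a b : Perm (Fin 5), a ∈ H → b ∈ H → a * b ∈ H := fun _ _ => Subgroup.mul_mem H
  intro g hg
  rcases hg with h | h | h | h <;> subst h
  · exact one_mem H
  · exact m _ _ (m _ _ (m _ _ (m _ _ (m _ _ (m _ _ hx hy) hx) hx) hy) hy) hx
  · exact m _ _ (m _ _ (m _ _ (m _ _ hx hy) hx) hy) hy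
  · exact m _ _ (m _ _ (m _ _ (m _ _ (m _ _ (m _ _ (m _ _ hx hy) hx) hx) hy) hy) hx)
      (m _ _ (m _ _ (m _ _ (m _ _ hx hy) hx) hy) hy)

private lemma HleA : H ≤ alternatingGroup (Fin 5) := by
  rw [Subgroup.closure_le]
  intro g hg
  rcases hg with h | h <;> subst h <;>
    · show _ ∈ alternatingGroup (Fin 5)
      rw [Perm.mem_alternatingGroup]
      decide

private lemma closure_eq : H = alternatingGroup (Fin 5) := by
  have h4 : (4 : ℕ) ∣ Nat.card H := cardK ▸ Subgroup.card_dvd_of_le KleH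
  have : Fact (Nat.Prime 3) := ⟨by norm_num⟩
  have ox : orderOf x = 3 := orderOf_eq_prime (by decide) (by decide)
  have : Fact (Nat.Prime 5) := ⟨by norm_num⟩
  have : Fact (Nat.Prime 3) := ⟨by norm_num⟩
  have oxy : orderOf (x * y) = 5 := orderOf_eq_prime (by decide) (by decide)
  have h3 : (3 : ℕ) ∣ Nat.card H := by
    have := Subgroup.card_dvd_of_le (Subgroup.zpowers_le.mpr hx)
    rwa [Nat.card_zpowers, ox] at this
  have h5 : (5 : ℕ) ∣ Nat.card H := by
    have := Subgroup.card_dvd_of_le (Subgroup.zpowers_le.mpr (Subgroup.mul_mem H hx hy))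
    rwa [Nat.card_zpowers, oxy] at this
  have hle : Nat.card H ∣ 60 := cardA ▸ Subgroup.card_dvd_of_le HleA
  have h60 : (60 : ℕ) ∣ Nat.card H := by
    have h12 : (12 : ℕ) ∣ Nat.card H := Nat.Coprime.mul_dvd_of_dvd_of_dvd (by norm_num) h4 h3
    exact Nat.Coprime.mul_dvd_of_dvd_of_dvd (by norm_num) h12 h5
  have hcard : Nat.card H = 60 := Nat.dvd_antisymm hle h60
  exact Subgroup.eq_of_le_of_card_ge HleA (by rw [hcard, cardA])

private lemma iter12 :
    (fun p : Equiv.Perm (Fin 5) × Equiv.Perm (Fin 5) =>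
        (p.1 * p.2, p.1 ^ 3 * p.2))^[12]
      (c[0, 1, 2], c[2, 3, 4]) = (c[0, 1, 2], c[2, 3, 4]) := by
  have h0 : (fun p : Equiv.Perm (Fin 5) × Equiv.Perm (Fin 5) =>
      (p.1 * p.2, p.1 ^ 3 * p.2)) (c[0, 1, 2], c[2, 3, 4]) = (c[0, 1, 2, 3, 4], c[2, 3, 4]) := by
    refine Prod.ext ?_ ?_ <;> exact Equiv.ext (by decide)
  have h1 : (fun p : Equiv.Perm (Fin 5) × Equiv.Perm (Fin 5) =>
      (p.1 * p.2, p.1 ^ 3 * p.2)) (c[0, 1, 2, 3, 4], c[2, 3, 4]) = (c[0, 1, 2, 4, 3], c[0, 3, 2, 1, 4]) := by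
    refine Prod.ext ?_ ?_ <;> exact Equiv.ext (by decide)
  have h2 : (fun p : Equiv.Perm (Fin 5) × Equiv.Perm (Fin 5) =>
      (p.1 * p.2, p.1 ^ 3 * p.2)) (c[0, 1, 2, 4, 3], c[0, 3, 2, 1, 4]) = (c[1, 3, 4], c[0, 2, 3]) := by
    refine Prod.ext ?_ ?_ <;> exact Equiv.ext (by decide)
  have h3 : (fun p : Equiv.Perm (Fin 5) × Equiv.Perm (Fin 5) =>
      (p.1 * p.2, p.1 ^ 3 * p.2)) (c[1, 3, 4], c[0, 2, 3]) = (c[0, 2, 4, 1, 3], c[0, 2, 3]) := by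
    refine Prod.ext ?_ ?_ <;> exact Equiv.ext (by decide)
  have h4 : (fun p : Equiv.Perm (Fin 5) × Equiv.Perm (Fin 5) =>
      (p.1 * p.2, p.1 ^ 3 * p.2)) (c[0, 2, 4, 1, 3], c[0, 2, 3]) = (c[0, 4, 1, 3, 2], c[0, 3, 1, 2, 4]) := by
    refine Prod.ext ?_ ?_ <;> exact Equiv.ext (by decide)
  have h5 : (fun p : Equiv.Perm (Fin 5) × Equiv.Perm (Fin 5) =>
      (p.1 * p.2, p.1 ^ 3 * p.2)) (c[0, 4, 1, 3, 2], c[0, 3, 1, 2, 4]) = (c[0, 2, 1], c[0, 4, 3]) := by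
    refine Prod.ext ?_ ?_ <;> exact Equiv.ext (by decide)
  have h6 : (fun p : Equiv.Perm (Fin 5) × Equiv.Perm (Fin 5) =>
      (p.1 * p.2, p.1 ^ 3 * p.2)) (c[0, 2, 1], c[0, 4, 3]) = (c[0, 4, 3, 2, 1], c[0, 4, 3]) := by
    refine Prod.ext ?_ ?_ <;> exact Equiv.ext (by decide)
  have h7 : (fun p : Equiv.Perm (Fin 5) × Equiv.Perm (Fin 5) =>
      (p.1 * p.2, p.1 ^ 3 * p.2)) (c[0, 4, 3, 2, 1], c[0, 4, 3]) = (c[0, 3, 4, 2, 1], c[0, 1, 3, 2, 4]) := by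
    refine Prod.ext ?_ ?_ <;> exact Equiv.ext (by decide)
  have h8 : (fun p : Equiv.Perm (Fin 5) × Equiv.Perm (Fin 5) =>
      (p.1 * p.2, p.1 ^ 3 * p.2)) (c[0, 3, 4, 2, 1], c[0, 1, 3, 2, 4]) = (c[1, 4, 3], c[0, 4, 2]) := by
    refine Prod.ext ?_ ?_ <;> exact Equiv.ext (by decide)
  have h9 : (fun p : Equiv.Perm (Fin 5) × Equiv.Perm (Fin 5) =>
      (p.1 * p.2, p.1 ^ 3 * p.2)) (c[1, 4, 3], c[0, 4, 2]) = (c[0, 3, 1, 4, 2], c[0, 4, 2]) := by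
    refine Prod.ext ?_ ?_ <;> exact Equiv.ext (by decide)
  have h10 : (fun p : Equiv.Perm (Fin 5) × Equiv.Perm (Fin 5) =>
      (p.1 * p.2, p.1 ^ 3 * p.2)) (c[0, 3, 1, 4, 2], c[0, 4, 2]) = (c[0, 2, 3, 1, 4], c[0, 3, 2, 4, 1]) := by
    refine Prod.ext ?_ ?_ <;> exact Equiv.ext (by decide)
  have h11 : (fun p : Equiv.Perm (Fin 5) × Equiv.Perm (Fin 5) =>
      (p.1 * p.2, p.1 ^ 3 * p.2)) (c[0, 2, 3, 1, 4], c[0, 3, 2, 4, 1]) = (c[0, 1, 2], c[2, 3, 4]) := by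
    refine Prod.ext ?_ ?_ <;> exact Equiv.ext (by decide)
  simp only [Function.iterate_succ_apply, Function.iterate_zero_apply, h0, h1, h2, h3, h4, h5, h6, h7, h8, h9, h10, h11]

/-- Let `x = (1 2 3)` and `y = (3 4 5)` be 3-cycles (on the five letters
`0,…,4` of `Fin 5` they are `c[0,1,2]` and `c[2,3,4]`), and let `T(u,v) = (u·v, u³·v)`.
Then `T¹²(x,y) = (x,y)`, and the subgroup generated by `{x, y}` is the whole
alternating group `A₅`. -/
theorem stmt17 :
    (fun p : Equiv.Perm (Fin 5) × Equiv.Perm (Fin 5) =>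
        (p.1 * p.2, p.1 ^ 3 * p.2))^[12]
      (c[0, 1, 2], c[2, 3, 4]) = (c[0, 1, 2], c[2, 3, 4]) ∧
    Subgroup.closure ({c[0, 1, 2], c[2, 3, 4]} : Set (Equiv.Perm (Fin 5))) =
      alternatingGroup (Fin 5) := by
  exact ⟨iter12, closure_eq⟩
end
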